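/- arXiv:1310.6019 — 2 statements merged into one kernel-verified Lean document; each statement's English description precedes it below -/
import Mathlib

section
/- Let G be a finite simple graph on n vertices that has at least one edge and is not a complete graph, and let ζ be a surprise-optimal clustering of G. Then the number of clusters of ζ satisfies 1 < |ζ| < n. -/
open Finset

/-- The surprise value `S(p, m, i_p, i_e)`. -/
def surpriseVal (p m ip ie : ℕ) : ℚ :=
  (∑ i ∈ Finset.Icc ie m, (ip.choose i * (p - ip).choose (m - i) : ℚ)) / (p.choose m)

variable {V : Type*} [Fintype V] [DecidableEq V]

open scoped Classical in
/-- The number of edges of `G`. -/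
noncomputable def numEdges (G : SimpleGraph V) : ℕ := G.edgeFinset.card

open scoped Classical in
/-- The number of intracluster edges of the clustering `ζ`, i.e. of edges of `G`
having both endpoints in the same cluster. -/
noncomputable def intraEdges (G : SimpleGraph V) (ζ : Finpartition (univ : Finset V)) : ℕ :=
  (G.edgeFinset.filter fun e => ∃ P ∈ ζ.parts, ∀ v ∈ e, v ∈ P).card

open scoped Classical in
/-- The number of intercluster edges of the clustering `ζ`, i.e. of edges of `G`
whose endpoints lie in different clusters. -/
noncomputable def interEdges (G : SimpleGraph V) (ζ : Finpartition (univ : Finset V)) : ℕ :=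
  (G.edgeFinset.filter fun e => ¬ ∃ P ∈ ζ.parts, ∀ v ∈ e, v ∈ P).card

/-- The number of intracluster vertex pairs of the clustering `ζ`. -/
def intraPairs (ζ : Finpartition (univ : Finset V)) : ℕ :=
  ∑ P ∈ ζ.parts, (P.card).choose 2

/-- The surprise of the clustering `ζ` of the graph `G`. -/
noncomputable def surprise (G : SimpleGraph V) (ζ : Finpartition (univ : Finset V)) : ℚ :=
  surpriseVal ((Fintype.card V).choose 2) (numEdges G) (intraPairs ζ) (intraEdges G ζ)

section Aux
variable {V : Type*} [Fintype V] [DecidableEq V]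

/-- The partition whose parts are `{a, b}` and singletons. -/
def pairPartition (a b : V) : Finpartition (univ : Finset V) where
  parts := insert {a, b} ((univ \ {a, b}).image fun v => {v})
  supIndep := by
    rw [supIndep_iff_pairwiseDisjoint]
    intro P hP Q hQ hPQ
    simp only [Function.onFun, id_eq]
    rw [Finset.disjoint_left]
    intro x hxP hxQ
    simp only [coe_insert, Set.mem_insert_iff, coe_image, Set.mem_image, mem_coe,
      mem_sdiff, mem_univ, true_and] at hP hQ
    rcases hP with rfl | ⟨u, hu, rfl⟩ <;> rcases hQ with rfl | ⟨v, hv, rfl⟩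
    · exact hPQ rfl
    · rw [mem_singleton] at hxQ; subst hxQ
      simp only [mem_insert, mem_singleton] at hxP hv; tauto
    · rw [mem_singleton] at hxP; subst hxP
      simp only [mem_insert, mem_singleton] at hxQ hu; tauto
    · rw [mem_singleton] at hxP hxQ; subst hxP; subst hxQ; exact hPQ rfl
  sup_parts := by
    ext x
    simp only [mem_sup, mem_insert, mem_univ, iff_true, mem_image, mem_sdiff, true_and]
    by_cases hx : x ∈ ({a, b} : Finset V)
    · exact ⟨{a, b}, Or.inl rfl, hx⟩
    · exact ⟨{x}, Or.inr ⟨x, by simpa using hx, rfl⟩, mem_singleton_self x⟩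
  bot_notMem := by
    simp only [bot_eq_empty, mem_insert, mem_image, mem_sdiff, mem_univ, true_and]
    push_neg
    refine ⟨?_, fun v _ => ?_⟩
    · intro h; exact absurd (h ▸ mem_insert_self a {b}) (notMem_empty a)
    · exact singleton_nonempty v

lemma intraPairs_pairPartition (a b : V) (hab : a ≠ b) :
    intraPairs (pairPartition a b) = 1 := by
  classical
  rw [intraPairs]
  rw [show (pairPartition a b : Finpartition (univ : Finset V)).parts
      = insert {a, b} ((univ \ {a, b}).image fun v => {v}) from rfl]
  rw [Finset.sum_insert, Finset.sum_eq_zero, Finset.card_insert_of_notMem (by simpa using hab)]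
  · simp
  · intro P hP
    obtain ⟨v, _, rfl⟩ := Finset.mem_image.1 hP
    simp
  · intro h
    obtain ⟨v, _, hv⟩ := Finset.mem_image.1 h
    have : ({v} : Finset V).card = ({a, b} : Finset V).card := by rw [hv]
    rw [Finset.card_singleton, Finset.card_insert_of_notMem (by simpa using hab),
      Finset.card_singleton] at this
    omega

lemma pairPartition_parts_mem {a b : V} {P : Finset V} (h : P ∈ (pairPartition a b).parts) :
    P = {a, b} ∨ ∃ v, P = {v} := by
  rcases Finset.mem_insert.1 h with h | h
  · exact Or.inl h
  · obtain ⟨v, _, rfl⟩ := Finset.mem_image.1 h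
    exact Or.inr ⟨v, rfl⟩

open scoped Classical in
lemma intraEdges_pairPartition (G : SimpleGraph V) {a b : V} (hab : G.Adj a b) :
    intraEdges G (pairPartition a b) = 1 := by
  classical
  have hfil : (G.edgeFinset.filter fun e => ∃ P ∈ (pairPartition a b).parts, ∀ v ∈ e, v ∈ P)
      = {s(a, b)} := by
    ext e
    induction e with
    | _ u v =>
      simp only [Finset.mem_filter, Finset.mem_singleton, SimpleGraph.mem_edgeFinset,
        SimpleGraph.mem_edgeSet, Sym2.mem_iff]
      constructor
      · rintro ⟨huv, P, hP, hall⟩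
        have hu := hall u (Or.inl rfl)
        have hv := hall v (Or.inr rfl)
        have hne := huv.ne
        rcases pairPartition_parts_mem hP with rfl | ⟨w, rfl⟩
        · rw [Finset.mem_insert, Finset.mem_singleton] at hu hv
          rcases hu with rfl | rfl <;> rcases hv with rfl | rfl
          · exact absurd rfl hne
          · rfl
          · exact Sym2.eq_swap
          · exact absurd rfl hne
        · rw [Finset.mem_singleton] at hu hv
          exact absurd (hu.trans hv.symm) hne
      · rintro h
        rw [Sym2.eq_iff] at h
        refine ⟨?_, {a, b}, Finset.mem_insert_self _ _, ?_⟩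
        · rcases h with ⟨rfl, rfl⟩ | ⟨rfl, rfl⟩
          · exact hab
          · exact hab.symm
        · intro x hx
          rcases h with ⟨rfl, rfl⟩ | ⟨rfl, rfl⟩ <;> rcases hx with rfl | rfl <;> simp
  rw [intraEdges, hfil, Finset.card_singleton]

lemma surpriseVal_one_one_lt {p m : ℕ} (h1 : 1 ≤ m) (hmp : m < p) :
    surpriseVal p m 1 1 < 1 := by
  obtain ⟨M, rfl⟩ : ∃ M, m = M + 1 := ⟨m - 1, by omega⟩
  obtain ⟨P, rfl⟩ : ∃ P, p = P + 1 := ⟨p - 1, by omega⟩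
  rw [surpriseVal]
  have hsum : ∑ i ∈ Finset.Icc 1 (M + 1),
      ((1 : ℕ).choose i * (P + 1 - 1).choose (M + 1 - i) : ℚ)
      = (P.choose M : ℚ) := by
    rw [Finset.sum_eq_single_of_mem 1 (Finset.mem_Icc.2 ⟨le_refl 1, by omega⟩)]
    · simp
    · intro i hi hne
      have h2 : 1 < i := lt_of_le_of_ne (Finset.mem_Icc.1 hi).1 (Ne.symm hne)
      rw [Nat.choose_eq_zero_of_lt h2]
      simp
  rw [hsum]
  have hpos : 0 < (P + 1).choose (M + 1) := Nat.choose_pos (by omega)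
  rw [div_lt_one (by exact_mod_cast hpos)]
  have hlt : P.choose M < (P + 1).choose (M + 1) := by
    have heq : (P + 1).choose (M + 1) = P.choose M + P.choose (M + 1) := Nat.choose_succ_succ P M
    have hpos2 := Nat.choose_pos (show M + 1 ≤ P by omega)
    omega
  exact_mod_cast hlt

lemma surpriseVal_zero_zero {p m : ℕ} (hmp : m ≤ p) : surpriseVal p m 0 0 = 1 := by
  rw [surpriseVal]
  have hsum : ∑ i ∈ Finset.Icc 0 m, ((0 : ℕ).choose i * (p - 0).choose (m - i) : ℚ)
      = (p.choose m : ℚ) := by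
    rw [Finset.sum_eq_single_of_mem 0 (Finset.mem_Icc.2 ⟨le_refl 0, Nat.zero_le m⟩)]
    · simp
    · intro i hi hne
      rw [Nat.choose_eq_zero_of_lt (Nat.pos_of_ne_zero hne)]
      simp
  rw [hsum, div_self]
  exact_mod_cast (Nat.choose_pos hmp).ne'

lemma surpriseVal_full {p m : ℕ} (hmp : m ≤ p) : surpriseVal p m p m = 1 := by
  rw [surpriseVal, Finset.Icc_self, Finset.sum_singleton, Nat.sub_self, Nat.sub_self]
  rw [Nat.choose_zero_right]
  rw [Nat.cast_one, mul_one, div_self]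
  exact_mod_cast (Nat.choose_pos hmp).ne'

end Aux

/-- A surprise-optimal clustering `ζ` of a graph with at least one edge that is not
complete has more than one and fewer than `n` clusters. -/
theorem stmt8 (G : SimpleGraph V) (hE : G.edgeSet.Nonempty) (hnc : G ≠ ⊤)
    (ζ : Finpartition (univ : Finset V))
    (hopt : ∀ ζ' : Finpartition (univ : Finset V), surprise G ζ ≤ surprise G ζ') :
    1 < ζ.parts.card ∧ ζ.parts.card < Fintype.card V := by
  classical
  obtain ⟨a, b, hab⟩ : ∃ a b, G.Adj a b := by
    obtain ⟨e, he⟩ := hE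
    revert he
    refine Sym2.ind ?_ e
    intro x y h
    exact ⟨x, y, h⟩
  have hne : a ≠ b := hab.ne
  set n := Fintype.card V with hn
  set p := n.choose 2 with hp
  set m := numEdges G with hm
  have hm1 : 1 ≤ m := by
    rw [hm, numEdges]
    exact Finset.card_pos.2 ⟨s(a, b), SimpleGraph.mem_edgeFinset.2 hab⟩
  have hmp : m < p := by
    rw [hm, hp, numEdges, ← SimpleGraph.card_edgeFinset_top_eq_card_choose_two]
    exact Finset.card_lt_card
      (SimpleGraph.edgeFinset_ssubset_edgeFinset.2 (lt_top_iff_ne_top.2 hnc))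
  have hkey : surprise G ζ < 1 := by
    calc surprise G ζ ≤ surprise G (pairPartition a b) := hopt _
    _ = surpriseVal p m 1 1 := by
        rw [surprise, intraPairs_pairPartition a b hne, intraEdges_pairPartition G hab]
    _ < 1 := surpriseVal_one_one_lt hm1 hmp
  have hVne : Nonempty V := ⟨a⟩
  have hcard_pos : 0 < ζ.parts.card :=
    Finset.card_pos.2 (ζ.parts_nonempty (by simp [Finset.univ_nonempty.ne_empty]))
  have hcard_le : ζ.parts.card ≤ n := by
    rw [hn, ← Finset.card_univ]
    exact ζ.card_parts_le_card
  constructor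
  · rcases Nat.lt_or_ge 1 ζ.parts.card with h | h
    · exact h
    · exfalso
      have hone : ζ.parts.card = 1 := le_antisymm h hcard_pos
      obtain ⟨P, hP⟩ := Finset.card_eq_one.1 hone
      have hPuniv : P = univ := by
        have := ζ.sup_parts
        rwa [hP, Finset.sup_singleton, id_eq] at this
      subst hPuniv
      have hip : intraPairs ζ = p := by
        rw [intraPairs, hP, Finset.sum_singleton, Finset.card_univ]
      have hie : intraEdges G ζ = m := by
        rw [intraEdges, Finset.filter_true_of_mem, hm, numEdges]
        intro e he
        exact ⟨univ, by rw [hP]; exact Finset.mem_singleton_self _, fun v _ => mem_univ v⟩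
      rw [surprise, hip, hie, ← hp, ← hm, surpriseVal_full hmp.le] at hkey
      exact lt_irrefl 1 hkey
  · rcases Nat.lt_or_ge ζ.parts.card n with h | h
    · exact h
    · exfalso
      have hcardn : ζ.parts.card = n := le_antisymm hcard_le h
      have hall1 : ∀ P ∈ ζ.parts, P.card = 1 := by
        have hsum : ∑ P ∈ ζ.parts, (1 : ℕ) = ∑ P ∈ ζ.parts, P.card := by
          rw [ζ.sum_card_parts, Finset.sum_const, smul_eq_mul, mul_one, hcardn, hn,
            Finset.card_univ]
        have hle : ∀ P ∈ ζ.parts, (1 : ℕ) ≤ P.card :=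
          fun P hP => Finset.card_pos.2 (ζ.nonempty_of_mem_parts hP)
        intro P hP
        exact ((Finset.sum_eq_sum_iff_of_le hle).1 hsum P hP).symm
      have hip : intraPairs ζ = 0 := by
        rw [intraPairs]
        refine Finset.sum_eq_zero fun P hP => ?_
        rw [hall1 P hP]
        rfl
      have hie : intraEdges G ζ = 0 := by
        rw [intraEdges, Finset.card_eq_zero, Finset.filter_eq_empty_iff]
        intro e he
        rw [SimpleGraph.mem_edgeFinset] at he
        revert he
        refine Sym2.ind ?_ e
        rintro u v he ⟨P, hP, hall⟩
        obtain ⟨w, rfl⟩ := Finset.card_eq_one.1 (hall1 P hP)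
        have hu := hall u (Sym2.mem_mk_left u v)
        have hv := hall v (Sym2.mem_mk_right u v)
        rw [Finset.mem_singleton] at hu hv
        exact (G.mem_edgeSet.1 he).ne (hu.trans hv.symm)
      rw [surprise, hip, hie, ← hp, ← hm, surpriseVal_zero_zero hmp.le] at hkey
      exact lt_irrefl 1 hkey
end

section
/- Let G be a finite simple graph that has at least one edge and is not a complete graph, and let ζ be a surprise-optimal clustering of G. Then every cluster of ζ induces a connected subgraph of G. -/
open Finset

lemma step_range (k q e N : ℕ) :
    ∑ j ∈ range (N+1), (k+1).choose (e+1+j) * q.choose (N-j)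
      = (∑ j ∈ range (N+1), k.choose (e+1+j) * (q+1).choose (N-j)) + k.choose e * q.choose N := by
  have h1 : ∀ j, (k+1).choose (e+1+j) = k.choose (e+j) + k.choose (e+1+j) := by
    intro j
    rw [show e+1+j = (e+j)+1 by ring, Nat.choose_succ_succ]
  have h2 : ∀ j < N, (q+1).choose (N-j) = q.choose (N-j-1) + q.choose (N-j) := by
    intro j hj
    rw [show N-j = (N-j-1)+1 by omega, Nat.choose_succ_succ, Nat.add_sub_cancel]
  -- expand LHS
  calc ∑ j ∈ range (N+1), (k+1).choose (e+1+j) * q.choose (N-j)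
      = ∑ j ∈ range (N+1), (k.choose (e+j) * q.choose (N-j)
          + k.choose (e+1+j) * q.choose (N-j)) := by
        refine Finset.sum_congr rfl fun j _ => ?_
        rw [h1 j, add_mul]
    _ = (∑ j ∈ range (N+1), k.choose (e+j) * q.choose (N-j))
          + ∑ j ∈ range (N+1), k.choose (e+1+j) * q.choose (N-j) := Finset.sum_add_distrib
    _ = ((∑ j ∈ range N, k.choose (e+1+j) * q.choose (N-1-j)) + k.choose e * q.choose N)
          + ∑ j ∈ range (N+1), k.choose (e+1+j) * q.choose (N-j) := by
        have hs := Finset.sum_range_succ' (fun j => k.choose (e+j) * q.choose (N-j)) N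
        rw [hs]
        simp only [add_zero, Nat.sub_zero]
        have he : ∀ j ∈ range N, k.choose (e+(j+1)) * q.choose (N-(j+1))
            = k.choose (e+1+j) * q.choose (N-1-j) := by
          intro j hj
          congr 2 <;> omega
        rw [Finset.sum_congr rfl he]
    _ = (∑ j ∈ range (N+1), k.choose (e+1+j) * (q+1).choose (N-j)) + k.choose e * q.choose N := by
        have hs1 := Finset.sum_range_succ (fun j => k.choose (e+1+j) * (q+1).choose (N-j)) N
        rw [hs1]
        have hs2 := Finset.sum_range_succ (fun j => k.choose (e+1+j) * q.choose (N-j)) N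
        rw [hs2]
        simp only [Nat.sub_self, Nat.choose_zero_right]
        have : ∑ j ∈ range N, k.choose (e+1+j) * (q+1).choose (N-j)
            = ∑ j ∈ range N, (k.choose (e+1+j) * q.choose (N-j-1)
                + k.choose (e+1+j) * q.choose (N-j)) := by
          refine Finset.sum_congr rfl fun j hj => ?_
          rw [h2 j (mem_range.mp hj), mul_add]
        rw [this, Finset.sum_add_distrib]
        have : ∑ j ∈ range N, k.choose (e+1+j) * q.choose (N-j-1)
            = ∑ j ∈ range N, k.choose (e+1+j) * q.choose (N-1-j) := by
          refine Finset.sum_congr rfl fun j hj => ?_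
          congr 2
          omega
        rw [this]
        ring

lemma Icc_to_range (e m k p : ℕ) (hm : e + 1 ≤ m) :
    ∑ i ∈ Icc (e+1) m, k.choose i * (p-k).choose (m-i)
      = ∑ j ∈ range ((m-(e+1))+1), k.choose (e+1+j) * (p-k).choose ((m-(e+1))-j) := by
  rw [show Icc (e+1) m = Ico (e+1) (m+1) by rw [Finset.Ico_add_one_right_eq_Icc]]
  rw [Finset.sum_Ico_eq_sum_range]
  have : m + 1 - (e+1) = (m-(e+1))+1 := by omega
  rw [this]
  refine Finset.sum_congr rfl fun j hj => ?_
  congr 2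
  have := mem_range.mp hj
  omega

lemma step_Icc (e m k p : ℕ) (hk : k < p) (hm : e + 1 ≤ m) :
    ∑ i ∈ Icc (e+1) m, (k+1).choose i * (p-(k+1)).choose (m-i)
      = (∑ i ∈ Icc (e+1) m, k.choose i * (p-k).choose (m-i))
        + k.choose e * (p-k-1).choose (m-(e+1)) := by
  rw [Icc_to_range e m (k+1) p hm, Icc_to_range e m k p hm]
  have h1 : p - (k+1) = p - k - 1 := by omega
  have h2 : p - k = (p-k-1) + 1 := by omega
  rw [h1, h2]
  exact step_range k (p-k-1) e (m-(e+1))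

lemma T_le (e m p : ℕ) (hm : e + 1 ≤ m) :
    ∀ a b : ℕ, a ≤ b → b ≤ p →
      (∑ i ∈ Icc (e+1) m, a.choose i * (p-a).choose (m-i))
        ≤ ∑ i ∈ Icc (e+1) m, b.choose i * (p-b).choose (m-i) := by
  intro a b
  induction b with
  | zero =>
    intro hab _
    have : a = 0 := by omega
    subst this; exact le_refl _
  | succ n ih =>
    intro hab hbp
    rcases Nat.lt_or_ge a (n+1) with h | h
    · have hle := ih (by omega) (by omega)
      rw [step_Icc e m n p (by omega) hm]
      omega
    · have : a = n+1 := by omega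
      subst this; exact le_refl _

lemma T_lt (e m p a b : ℕ) (hm : e + 1 ≤ m) (hea : e ≤ a) (hab : a < b) (hbp : b ≤ p)
    (hint : m - (e+1) ≤ p - b) :
    (∑ i ∈ Icc (e+1) m, a.choose i * (p-a).choose (m-i))
      < ∑ i ∈ Icc (e+1) m, b.choose i * (p-b).choose (m-i) := by
  have hb1 : b - 1 < p := by omega
  have hstep := step_Icc e m (b-1) p hb1 hm
  have hb : b - 1 + 1 = b := by omega
  rw [hb] at hstep
  have hpos : 0 < (b-1).choose e * (p-(b-1)-1).choose (m-(e+1)) := by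
    apply Nat.mul_pos
    · exact Nat.choose_pos (by omega)
    · exact Nat.choose_pos (by omega)
  have hle := T_le e m p hm a (b-1) (by omega) (by omega)
  omega

lemma castsum (e m p k : ℕ) :
    (∑ i ∈ Icc (e+1) m, ((k.choose i : ℚ) * ((p-k).choose (m-i) : ℚ)))
      = ((∑ i ∈ Icc (e+1) m, k.choose i * (p-k).choose (m-i) : ℕ) : ℚ) := by
  push_cast
  rfl

lemma surpriseVal_lt (p m e a b : ℕ) (hm : e + 1 ≤ m) (hmp : m ≤ p) (hea : e + 1 ≤ a)
    (hab : a < b) (hbp : b ≤ p) (hint : m - (e+1) ≤ p - b) :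
    surpriseVal p m a (e+1) < surpriseVal p m b (e+1) := by
  have hd : (0:ℚ) < (p.choose m : ℚ) := by exact_mod_cast Nat.choose_pos hmp
  unfold surpriseVal
  rw [div_lt_div_iff₀ hd hd, castsum, castsum]
  have h := T_lt e m p a b hm (by omega) hab hbp hint
  exact mul_lt_mul_of_pos_right (by exact_mod_cast h) hd

lemma surpriseVal_eq_one (p m ip : ℕ) (hmp : m ≤ p) (hip : ip ≤ p) :
    surpriseVal p m ip 0 = 1 := by
  have hd : (p.choose m : ℚ) ≠ 0 := by
    exact_mod_cast (Nat.choose_pos hmp).ne'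
  unfold surpriseVal
  rw [div_eq_one_iff_eq hd]
  have : (∑ i ∈ Icc 0 m, ip.choose i * (p - ip).choose (m - i) : ℕ) = p.choose m := by
    have hico : Icc 0 m = range (m+1) := by
      rw [Finset.range_eq_Ico, Finset.Ico_add_one_right_eq_Icc]
    rw [hico]
    have hv := Nat.add_choose_eq ip (p - ip) m
    rw [Finset.Nat.sum_antidiagonal_eq_sum_range_succ_mk] at hv
    rw [← hv]
    congr 1
    omega
  calc (∑ i ∈ Icc 0 m, ((ip.choose i : ℚ) * ((p-ip).choose (m-i) : ℚ)))
      = ((∑ i ∈ Icc 0 m, ip.choose i * (p - ip).choose (m - i) : ℕ) : ℚ) := by push_cast; rfl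
    _ = (p.choose m : ℚ) := by rw [this]

lemma surpriseVal_one_one (p m : ℕ) (h1 : 1 ≤ m) (hmp : m < p) :
    surpriseVal p m 1 1 < 1 := by
  have hd : (0:ℚ) < (p.choose m : ℚ) := by exact_mod_cast Nat.choose_pos (by omega : m ≤ p)
  unfold surpriseVal
  rw [div_lt_one hd]
  have hsum : (∑ i ∈ Icc 1 m, ((Nat.choose 1 i : ℚ) * ((p-1).choose (m-i) : ℚ)))
      = ((p-1).choose (m-1) : ℚ) := by
    rw [Finset.sum_eq_single_of_mem 1 (by simp [h1])]
    · simp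
    · intro i hi hne
      have h2 : 2 ≤ i := by
        have := (Finset.mem_Icc.mp hi).1
        omega
      have : Nat.choose 1 i = 0 := Nat.choose_eq_zero_of_lt (by omega)
      rw [this]
      simp
  rw [hsum]
  have hpascal : p.choose m = (p-1).choose (m-1) + (p-1).choose m := by
    have h := Nat.choose_succ_succ (p-1) (m-1)
    rw [show (p-1).succ = p by omega, show (m-1).succ = m by omega] at h
    exact h
  have hpos : 0 < (p-1).choose m := Nat.choose_pos (by omega)
  have : (p-1).choose (m-1) < p.choose m := by omega
  exact_mod_cast this

variable {V : Type*} [Fintype V] [DecidableEq V]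

open scoped Classical

lemma ND_card : ((univ : Finset (Sym2 V)).filter (fun s => ¬ s.IsDiag)).card
    = (Fintype.card V).choose 2 := by
  rw [← Sym2.card_subtype_not_diag]
  exact (Fintype.card_subtype _).symm

lemma intra_filter_card (ζ : Finpartition (univ : Finset V)) :
    (((univ : Finset (Sym2 V)).filter (fun s => ¬ s.IsDiag)).filter
      (fun s => ∃ P ∈ ζ.parts, ∀ v ∈ s, v ∈ P)).card = intraPairs ζ := by
  have hset : ((univ : Finset (Sym2 V)).filter (fun s => ¬ s.IsDiag)).filter
      (fun s => ∃ P ∈ ζ.parts, ∀ v ∈ s, v ∈ P)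
      = ζ.parts.biUnion (fun P => P.offDiag.image Sym2.mk.uncurry) := by
    ext s
    induction s with
    | _ a b =>
      simp only [mem_filter, mem_univ, true_and, mem_biUnion, mem_image, mem_offDiag,
        Prod.exists, Sym2.mk_isDiag_iff, Sym2.mem_iff]
      constructor
      · rintro ⟨hne, P, hP, hmem⟩
        exact ⟨P, hP, a, b, ⟨hmem a (Or.inl rfl), hmem b (Or.inr rfl), hne⟩, rfl⟩
      · rintro ⟨P, hP, x, y, ⟨hx, hy, hxy⟩, hs⟩
        rw [Function.uncurry_apply_pair, Sym2.eq_iff] at hs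
        rcases hs with ⟨rfl, rfl⟩ | ⟨rfl, rfl⟩
        · refine ⟨hxy, P, hP, ?_⟩
          rintro v (rfl | rfl) <;> assumption
        · refine ⟨fun h => hxy h.symm, P, hP, ?_⟩
          rintro v (rfl | rfl) <;> assumption
  rw [hset, Finset.card_biUnion]
  · exact Finset.sum_congr rfl fun P _ => Sym2.card_image_offDiag P
  · intro P hP Q hQ hne
    rw [Function.onFun, Finset.disjoint_left]
    intro s hsP hsQ
    obtain ⟨⟨x, y⟩, hxy, rfl⟩ := Finset.mem_image.mp hsP
    obtain ⟨⟨x', y'⟩, hxy', hs'⟩ := Finset.mem_image.mp hsQ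
    rw [Function.uncurry_apply_pair, Function.uncurry_apply_pair, Sym2.eq_iff] at hs'
    have hxQ : x ∈ Q := by
      rcases hs' with ⟨rfl, rfl⟩ | ⟨rfl, rfl⟩
      · exact (Finset.mem_offDiag.mp hxy').1
      · exact (Finset.mem_offDiag.mp hxy').2.1
    exact hne (ζ.eq_of_mem_parts hP hQ (Finset.mem_offDiag.mp hxy).1 hxQ)

lemma edge_sub (G : SimpleGraph V) :
    G.edgeFinset ⊆ (univ : Finset (Sym2 V)).filter (fun s => ¬ s.IsDiag) := by
  intro e he
  rw [mem_filter]
  exact ⟨mem_univ _, G.not_isDiag_of_mem_edgeSet (SimpleGraph.mem_edgeFinset.mp he)⟩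

lemma counts (G : SimpleGraph V) (ζ : Finpartition (univ : Finset V)) :
    intraEdges G ζ ≤ intraPairs ζ ∧ intraPairs ζ ≤ (Fintype.card V).choose 2 ∧
      intraEdges G ζ ≤ numEdges G ∧
      numEdges G - intraEdges G ζ ≤ (Fintype.card V).choose 2 - intraPairs ζ ∧
      numEdges G ≤ (Fintype.card V).choose 2 := by
  set ND := (univ : Finset (Sym2 V)).filter (fun s => ¬ s.IsDiag) with hND
  set c := fun s : Sym2 V => ∃ P ∈ ζ.parts, ∀ v ∈ s, v ∈ P with hc
  have h1 : intraEdges G ζ ≤ intraPairs ζ := by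
    rw [intraEdges, ← intra_filter_card ζ]
    exact card_le_card (filter_subset_filter _ (edge_sub G))
  have h2 : intraPairs ζ ≤ (Fintype.card V).choose 2 := by
    rw [← intra_filter_card ζ, ← ND_card (V := V)]
    exact card_le_card (filter_subset _ _)
  have h3 : intraEdges G ζ ≤ numEdges G := card_le_card (filter_subset _ _)
  have h5 : numEdges G ≤ (Fintype.card V).choose 2 := by
    rw [numEdges, ← ND_card (V := V)]
    exact card_le_card (edge_sub G)
  refine ⟨h1, h2, h3, ?_, h5⟩
  have hsplitE : intraEdges G ζ + interEdges G ζ = numEdges G :=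
    Finset.card_filter_add_card_filter_not _
  have hsplitP : (ND.filter c).card + (ND.filter (fun s => ¬ c s)).card = ND.card :=
    Finset.card_filter_add_card_filter_not _
  have hle : interEdges G ζ ≤ (ND.filter (fun s => ¬ c s)).card :=
    card_le_card (filter_subset_filter _ (edge_sub G))
  have hip : (ND.filter c).card = intraPairs ζ := intra_filter_card ζ
  have hnd : ND.card = (Fintype.card V).choose 2 := ND_card
  omega

lemma choose_two_add (a b : ℕ) : (a+b).choose 2 = a.choose 2 + b.choose 2 + a*b := by
  induction a with
  | zero => simp
  | succ n ih =>
    have h1 : ((n+b)+1).choose 2 = (n+b).choose 1 + (n+b).choose 2 := Nat.choose_succ_succ (n+b) 1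
    have h2 : (n+1).choose 2 = n.choose 1 + n.choose 2 := Nat.choose_succ_succ n 1
    rw [Nat.choose_one_right] at h1 h2
    have h3 : n+1+b = (n+b)+1 := by ring
    rw [h3, h1, h2, ih]
    ring

lemma split_exists (G : SimpleGraph V) (ζ : Finpartition (univ : Finset V)) (P : Finset V)
    (hP : P ∈ ζ.parts) (A B : Finset V) (hA : A.Nonempty) (hB : B.Nonempty)
    (hdisj : Disjoint A B) (hunion : A ∪ B = P)
    (hedge : ∀ a ∈ A, ∀ b ∈ B, ¬ G.Adj a b) :
    ∃ ζ' : Finpartition (univ : Finset V),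
      intraPairs ζ' + A.card * B.card = intraPairs ζ ∧ intraEdges G ζ' = intraEdges G ζ := by
  have hAP : A ⊆ P := hunion ▸ Finset.subset_union_left
  have hBP : B ⊆ P := hunion ▸ Finset.subset_union_right
  have hABne : A ≠ B := by
    rintro rfl
    exact hA.ne_empty (disjoint_self.mp hdisj)
  have hpd : (↑ζ.parts : Set (Finset V)).PairwiseDisjoint id :=
    Finset.supIndep_iff_pairwiseDisjoint.mp ζ.supIndep
  have hAer : A ∉ ζ.parts.erase P := by
    intro h
    obtain ⟨a, ha⟩ := hA
    have := ζ.eq_of_mem_parts (Finset.mem_of_mem_erase h) hP ha (hAP ha)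
    exact (Finset.mem_erase.mp h).1 this
  have hBer : B ∉ ζ.parts.erase P := by
    intro h
    obtain ⟨b, hb⟩ := hB
    have := ζ.eq_of_mem_parts (Finset.mem_of_mem_erase h) hP hb (hBP hb)
    exact (Finset.mem_erase.mp h).1 this
  have hAnot : A ∉ insert B (ζ.parts.erase P) := by
    rw [Finset.mem_insert]
    rintro (h | h)
    · exact hABne h
    · exact hAer h
  have hdisjP : ∀ Q ∈ ζ.parts.erase P, Disjoint P Q := by
    intro Q hQ
    exact hpd hP (Finset.mem_of_mem_erase hQ) (Ne.symm (Finset.mem_erase.mp hQ).1)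
  refine ⟨⟨insert A (insert B (ζ.parts.erase P)), ?_, ?_, ?_⟩, ?_, ?_⟩
  · rw [Finset.supIndep_iff_pairwiseDisjoint]
    intro X hX Y hY hne
    simp only [Finset.coe_insert, Set.mem_insert_iff, Finset.mem_coe] at hX hY
    have key : ∀ Z, (Z = A ∨ Z = B ∨ Z ∈ ζ.parts.erase P) → Z ⊆ P ∨ Z ∈ ζ.parts.erase P := by
      rintro Z (rfl | rfl | h)
      · exact Or.inl hAP
      · exact Or.inl hBP
      · exact Or.inr h
    rcases hX with rfl | rfl | hX <;> rcases hY with rfl | rfl | hY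
    · exact absurd rfl hne
    · exact hdisj
    · exact (hdisjP _ hY).mono_left hAP
    · exact hdisj.symm
    · exact absurd rfl hne
    · exact (hdisjP _ hY).mono_left hBP
    · exact ((hdisjP _ hX).mono_left hAP).symm
    · exact ((hdisjP _ hX).mono_left hBP).symm
    · exact hpd (Finset.mem_of_mem_erase hX) (Finset.mem_of_mem_erase hY) hne
  · have h := ζ.sup_parts
    rw [← Finset.insert_erase hP, Finset.sup_insert] at h
    simp only [Finset.sup_insert, id_eq] at h ⊢
    rw [← sup_assoc, show A ⊔ B = P from by rw [Finset.sup_eq_union, hunion]]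
    exact h
  · simp only [Finset.mem_insert, not_or]
    exact ⟨fun h => hA.ne_empty (by simpa using h.symm),
      fun h => hB.ne_empty (by simpa using h.symm),
      fun h => ζ.bot_notMem (Finset.mem_of_mem_erase h)⟩
  · -- intraPairs
    have hcard : P.card = A.card + B.card := by
      rw [← hunion, Finset.card_union_of_disjoint hdisj]
    rw [intraPairs, intraPairs]
    rw [Finset.sum_insert hAnot, Finset.sum_insert hBer]
    conv_rhs => rw [← Finset.insert_erase hP]
    rw [Finset.sum_insert (Finset.notMem_erase P ζ.parts)]
    rw [hcard, choose_two_add]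
    ring
  · -- intraEdges
    rw [intraEdges, intraEdges]
    congr 1
    apply Finset.filter_congr
    intro e he
    obtain ⟨u, v, rfl⟩ : ∃ u v, e = s(u, v) := by
      induction e using Sym2.ind with
      | _ u v => exact ⟨u, v, rfl⟩
    have huv : G.Adj u v := by
      rw [SimpleGraph.mem_edgeFinset] at he
      exact he
    constructor
    · rintro ⟨Q, hQ, hw⟩
      rcases Finset.mem_insert.mp hQ with rfl | hQ'
      · exact ⟨P, hP, fun w hw' => hAP (hw w hw')⟩
      rcases Finset.mem_insert.mp hQ' with rfl | hQ''
      · exact ⟨P, hP, fun w hw' => hBP (hw w hw')⟩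
      · exact ⟨Q, Finset.mem_of_mem_erase hQ'', hw⟩
    · rintro ⟨Q, hQ, hw⟩
      by_cases hQP : Q = P
      · subst hQP
        have hu : u ∈ A ∪ B := by rw [hunion]; exact hw u (Sym2.mem_mk_left u v)
        have hv : v ∈ A ∪ B := by rw [hunion]; exact hw v (Sym2.mem_mk_right u v)
        rcases Finset.mem_union.mp hu with huA | huB
        · have hvA : v ∈ A := by
            rcases Finset.mem_union.mp hv with h | h
            · exact h
            · exact absurd huv (hedge u huA v h)
          refine ⟨A, Finset.mem_insert_self _ _, ?_⟩
          intro w hw'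
          rcases Sym2.mem_iff.mp hw' with rfl | rfl <;> assumption
        · have hvB : v ∈ B := by
            rcases Finset.mem_union.mp hv with h | h
            · exact absurd huv.symm (hedge v h u huB)
            · exact h
          refine ⟨B, Finset.mem_insert_of_mem (Finset.mem_insert_self _ _), ?_⟩
          intro w hw'
          rcases Sym2.mem_iff.mp hw' with rfl | rfl <;> assumption
      · exact ⟨Q, Finset.mem_insert_of_mem (Finset.mem_insert_of_mem
          (Finset.mem_erase.mpr ⟨hQP, hQ⟩)), hw⟩

lemma zeta0_exists (G : SimpleGraph V) {a b : V} (hab : G.Adj a b) :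
    ∃ ζ₀ : Finpartition (univ : Finset V), intraPairs ζ₀ = 1 ∧ intraEdges G ζ₀ = 1 := by
  have hne : a ≠ b := hab.ne
  have hcard2 : ({a, b} : Finset V).card = 2 := Finset.card_pair hne
  set parts₀ : Finset (Finset V) :=
    insert {a, b} ((univ \ {a, b}).image (fun x => ({x} : Finset V))) with hparts
  have hmem_img : ∀ Q ∈ (univ \ {a, b}).image (fun x => ({x} : Finset V)),
      ∃ x, x ∉ ({a, b} : Finset V) ∧ Q = {x} := by
    intro Q hQ
    obtain ⟨x, hx, rfl⟩ := Finset.mem_image.mp hQ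
    exact ⟨x, (Finset.mem_sdiff.mp hx).2, rfl⟩
  have hnotin : ({a, b} : Finset V) ∉ (univ \ {a, b}).image (fun x => ({x} : Finset V)) := by
    intro h
    obtain ⟨x, _, hx⟩ := hmem_img _ h
    rw [hx] at hcard2
    simp at hcard2
  refine ⟨⟨parts₀, ?_, ?_, ?_⟩, ?_, ?_⟩
  · rw [Finset.supIndep_iff_pairwiseDisjoint]
    intro X hX Y hY hXY
    simp only [hparts, Finset.coe_insert, Set.mem_insert_iff, Finset.mem_coe] at hX hY
    rcases hX with rfl | hX <;> rcases hY with rfl | hY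
    · exact absurd rfl hXY
    · obtain ⟨y, hy, rfl⟩ := hmem_img _ hY
      exact Finset.disjoint_singleton_right.mpr hy
    · obtain ⟨x, hx, rfl⟩ := hmem_img _ hX
      exact (Finset.disjoint_singleton_right.mpr hx).symm
    · obtain ⟨x, hx, rfl⟩ := hmem_img _ hX
      obtain ⟨y, hy, rfl⟩ := hmem_img _ hY
      have hxy : x ≠ y := fun h => hXY (by rw [h])
      exact Finset.disjoint_singleton_left.mpr (by simp [hxy])
  · apply Finset.eq_univ_iff_forall.mpr
    intro v
    rw [Finset.mem_sup]
    by_cases hv : v ∈ ({a, b} : Finset V)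
    · exact ⟨{a, b}, Finset.mem_insert_self _ _, hv⟩
    · refine ⟨{v}, ?_, Finset.mem_singleton_self v⟩
      apply Finset.mem_insert_of_mem
      exact Finset.mem_image.mpr ⟨v, Finset.mem_sdiff.mpr ⟨Finset.mem_univ v, hv⟩, rfl⟩
  · intro h
    rcases Finset.mem_insert.mp h with h' | h'
    · have : ({a, b} : Finset V).card = 0 := by rw [← h']; rfl
      omega
    · obtain ⟨x, _, hx⟩ := hmem_img _ h'
      exact absurd hx.symm (Finset.singleton_ne_empty x)
  · rw [intraPairs]
    show ∑ P ∈ parts₀, (P.card).choose 2 = 1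
    rw [hparts, Finset.sum_insert hnotin, hcard2]
    have hz : ∀ Q ∈ (univ \ {a, b}).image (fun x => ({x} : Finset V)),
        (Q.card).choose 2 = 0 := by
      intro Q hQ
      obtain ⟨x, _, rfl⟩ := hmem_img _ hQ
      simp
    rw [Finset.sum_eq_zero hz]
    decide
  · rw [intraEdges]
    have hfil : (G.edgeFinset.filter fun e => ∃ P ∈ parts₀, ∀ v ∈ e, v ∈ P)
        = {s(a, b)} := by
      ext e
      simp only [Finset.mem_filter, Finset.mem_singleton]
      constructor
      · rintro ⟨he, Q, hQ, hw⟩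
        obtain ⟨u, v, rfl⟩ : ∃ u v, e = s(u, v) := by
          induction e using Sym2.ind with
          | _ u v => exact ⟨u, v, rfl⟩
        have huv : G.Adj u v := by rwa [SimpleGraph.mem_edgeFinset] at he
        rcases Finset.mem_insert.mp hQ with rfl | hQ'
        · have hu := hw u (Sym2.mem_mk_left u v)
          have hv := hw v (Sym2.mem_mk_right u v)
          simp only [Finset.mem_insert, Finset.mem_singleton] at hu hv
          rcases hu with rfl | rfl <;> rcases hv with rfl | rfl
          · exact absurd rfl huv.ne
          · rfl
          · exact Sym2.eq_swap
          · exact absurd rfl huv.ne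
        · obtain ⟨x, _, rfl⟩ := hmem_img _ hQ'
          have hu := Finset.mem_singleton.mp (hw u (Sym2.mem_mk_left u v))
          have hv := Finset.mem_singleton.mp (hw v (Sym2.mem_mk_right u v))
          rw [hu, hv] at huv
          exact absurd rfl huv.ne
      · rintro rfl
        refine ⟨SimpleGraph.mem_edgeFinset.mpr hab, {a, b}, Finset.mem_insert_self _ _, ?_⟩
        intro w hw
        rcases Sym2.mem_iff.mp hw with rfl | rfl
        · exact Finset.mem_insert_self _ _
        · exact Finset.mem_insert_of_mem (Finset.mem_singleton_self _)
    rw [hfil, Finset.card_singleton]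

/-- Every cluster of a surprise-optimal clustering of a graph with at least one edge
that is not complete induces a connected subgraph. -/
theorem stmt10 (G : SimpleGraph V) (hE : G.edgeSet.Nonempty) (hnc : G ≠ ⊤)
    (ζ : Finpartition (univ : Finset V))
    (hopt : ∀ ζ' : Finpartition (univ : Finset V), surprise G ζ ≤ surprise G ζ') :
    ∀ P ∈ ζ.parts, (G.induce (P : Set V)).Connected := by
  intro P hP
  by_contra hcon
  -- basic notation
  set p := (Fintype.card V).choose 2 with hpdef
  set m := numEdges G with hmdef
  -- an edge
  obtain ⟨e₀, he₀⟩ := hE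
  obtain ⟨a, b, rfl⟩ : ∃ u v, e₀ = s(u, v) := by
    induction e₀ using Sym2.ind with
    | _ u v => exact ⟨u, v, rfl⟩
  have hab : G.Adj a b := he₀
  have hm1 : 1 ≤ m := by
    rw [hmdef, numEdges]
    exact Finset.card_pos.mpr ⟨s(a, b), SimpleGraph.mem_edgeFinset.mpr hab⟩
  -- a non-edge
  have hex : ∃ u v, u ≠ v ∧ ¬ G.Adj u v := by
    by_contra h
    push_neg at h
    apply hnc
    ext u v
    simp only [SimpleGraph.top_adj]
    exact ⟨fun h' => h'.ne, fun hne => h u v hne⟩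
  obtain ⟨u₀, v₀, hne₀, hnadj₀⟩ := hex
  have hmp : m < p := by
    rw [hmdef, hpdef, numEdges, ← ND_card (V := V)]
    apply Finset.card_lt_card
    rw [Finset.ssubset_iff_of_subset (edge_sub G)]
    refine ⟨s(u₀, v₀), Finset.mem_filter.mpr ⟨Finset.mem_univ _, by
      rw [Sym2.mk_isDiag_iff]; exact hne₀⟩, by
      rw [SimpleGraph.mem_edgeFinset]; exact hnadj₀⟩
  obtain ⟨hc1, hc2, hc3, hc4, _⟩ := counts G ζ
  -- intraEdges ζ ≥ 1
  have hie1 : 1 ≤ intraEdges G ζ := by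
    by_contra h
    have hie0 : intraEdges G ζ = 0 := by omega
    obtain ⟨ζ₀, hz1, hz2⟩ := zeta0_exists G hab
    have h1 : surprise G ζ = 1 := by
      rw [surprise, hie0, ← hmdef, ← hpdef]
      exact surpriseVal_eq_one p m _ (by omega) hc2
    have h2 : surprise G ζ₀ < 1 := by
      rw [surprise, hz1, hz2, ← hmdef, ← hpdef]
      exact surpriseVal_one_one p m hm1 hmp
    have := hopt ζ₀
    rw [h1] at this
    exact absurd (lt_of_le_of_lt this h2) (lt_irrefl 1)
  -- split the disconnected part
  have hPne : P.Nonempty := ζ.nonempty_of_mem_parts hP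
  obtain ⟨x₀, hx₀⟩ := hPne
  have hnonempty : Nonempty (↑(P : Set V)) := ⟨⟨x₀, Finset.mem_coe.mpr hx₀⟩⟩
  have hnpre : ¬ (G.induce (P : Set V)).Preconnected := by
    intro h
    exact hcon ⟨h⟩
  rw [SimpleGraph.Preconnected] at hnpre
  push_neg at hnpre
  obtain ⟨⟨uv, huP⟩, ⟨wv, hwP⟩, huw⟩ := hnpre
  set A := P.filter (fun v => ∃ h : v ∈ P,
    (G.induce (P : Set V)).Reachable ⟨uv, huP⟩ ⟨v, Finset.mem_coe.mpr h⟩) with hAdef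
  set B := P \ A with hBdef
  have hreachA : ∀ v (h : v ∈ P), v ∈ A ↔
      (G.induce (P : Set V)).Reachable ⟨uv, huP⟩ ⟨v, Finset.mem_coe.mpr h⟩ := by
    intro v h
    rw [hAdef, Finset.mem_filter]
    constructor
    · rintro ⟨_, _, hr⟩
      exact hr
    · intro hr
      exact ⟨h, h, hr⟩
  have huvP : uv ∈ P := Finset.mem_coe.mp huP
  have hAne : A.Nonempty := ⟨uv, (hreachA uv huvP).mpr (SimpleGraph.Reachable.refl _)⟩
  have hwvP : wv ∈ P := Finset.mem_coe.mp hwP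
  have hBne : B.Nonempty := by
    refine ⟨wv, Finset.mem_sdiff.mpr ⟨hwvP, fun h => ?_⟩⟩
    exact huw ((hreachA wv hwvP).mp h)
  have hdisj : Disjoint A B := Finset.disjoint_sdiff
  have hunion : A ∪ B = P := Finset.union_sdiff_of_subset (Finset.filter_subset _ _)
  have hedge : ∀ x ∈ A, ∀ y ∈ B, ¬ G.Adj x y := by
    intro x hx y hy hadj
    have hxP : x ∈ P := Finset.filter_subset _ _ hx
    have hyP : y ∈ P := (Finset.mem_sdiff.mp hy).1
    have hyA : y ∉ A := (Finset.mem_sdiff.mp hy).2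
    have hrx := (hreachA x hxP).mp hx
    have hadj' : (G.induce (P : Set V)).Adj ⟨x, Finset.mem_coe.mpr hxP⟩
        ⟨y, Finset.mem_coe.mpr hyP⟩ := by
      simp only [SimpleGraph.comap_adj]
      exact hadj
    exact hyA ((hreachA y hyP).mpr (hrx.trans hadj'.reachable))
  obtain ⟨ζ', hip', hie'⟩ := split_exists G ζ P hP A B hAne hBne hdisj hunion hedge
  obtain ⟨hc1', _, _, _, _⟩ := counts G ζ'
  have hABpos : 1 ≤ A.card * B.card :=
    Nat.mul_pos (Finset.card_pos.mpr hAne) (Finset.card_pos.mpr hBne)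
  -- strict decrease
  have hkey : surpriseVal p m (intraPairs ζ') (intraEdges G ζ)
      < surpriseVal p m (intraPairs ζ) (intraEdges G ζ) := by
    have h := surpriseVal_lt p m (intraEdges G ζ - 1) (intraPairs ζ') (intraPairs ζ)
      (by omega) (by omega) (by rw [← hie']; omega) (by omega) hc2 (by omega)
    have heq : intraEdges G ζ - 1 + 1 = intraEdges G ζ := by omega
    rwa [heq] at h
  have hle := hopt ζ'
  rw [surprise, surprise, ← hmdef, ← hpdef, hie'] at hle
  exact absurd (lt_of_le_of_lt hle hkey) (lt_irrefl _)
end
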